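/- There is a bounded linear operator T_N : L_1[0,1] → L_1[0,1] such that T_N(N·𝟙_{[(j−1)/N, j/N)}) = x_j for all 1 ≤ j ≤ N and ‖I − T_N‖ ≤ ε, where I is the identity operator on L_1[0,1] and the operator norm is with respect to the L_1 norm. -/

import Mathlib

open MeasureTheory Set Finset

/-- The interval `I_k(i)` of width `1/(m*N)`, the `i`-th subinterval (1-based)
of `[(k-1)/N, k/N)`. -/
noncomputable def Ik (m N k i : ℕ) : Set ℝ :=
  Set.Ico (((k : ℝ) - 1) / N + ((i : ℝ) - 1) / (m * N))
    (((k : ℝ) - 1) / N + (i : ℝ) / (m * N))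

/-- The functions `x_j` of the construction: for `1 ≤ j ≤ n`,
`x_j = N·𝟙_{[(j-1)/N, j/N)}`, and for `n < j ≤ N`,
`x_j = N·∑_{k=1}^n 𝟙_{I_k(i_{k,j})} + N·𝟙_{[(j-1)/N, j/N)}`, where the indices
`i_{k,j}` are encoded (0-based) by the map `idx`. -/
noncomputable def xfun (n m N : ℕ) (idx : ℕ → Fin n → Fin m) (j : ℕ) : ℝ → ℝ :=
  fun t =>
    if j ≤ n then
      (N : ℝ) * Set.indicator (Set.Ico (((j : ℝ) - 1) / N) ((j : ℝ) / N)) (fun _ => (1 : ℝ)) t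
    else
      (N : ℝ) * ∑ k : Fin n,
          Set.indicator (Ik m N ((k : ℕ) + 1) ((idx j k : ℕ) + 1)) (fun _ => (1 : ℝ)) t
        + (N : ℝ) * Set.indicator (Set.Ico (((j : ℝ) - 1) / N) ((j : ℝ) / N)) (fun _ => (1 : ℝ)) t

namespace Stmt0Aux

lemma coeFn_finset_sum {μ : Measure ℝ} {ι : Type*} [DecidableEq ι] (s : Finset ι)
    (F : ι → Lp ℝ 1 μ) :
    ((∑ i ∈ s, F i : Lp ℝ 1 μ) : ℝ → ℝ) =ᵐ[μ] fun t => ∑ i ∈ s, (F i : ℝ → ℝ) t := by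
  induction s using Finset.induction_on with
  | empty => simp only [Finset.sum_empty]; exact Lp.coeFn_zero ℝ 1 μ
  | insert a s' h ih =>
    rw [Finset.sum_insert h]
    refine (Lp.coeFn_add _ _).trans ?_
    filter_upwards [ih] with t ht
    rw [Pi.add_apply, ht, Finset.sum_insert h]

noncomputable def setIntCLM (μ : Measure ℝ) (s : Set ℝ) : Lp ℝ 1 μ →L[ℝ] ℝ :=
  LinearMap.mkContinuous
    { toFun := fun f => ∫ t in s, (f : ℝ → ℝ) t ∂μ
      map_add' := fun f g => by
        have h1 : ((f + g : Lp ℝ 1 μ) : ℝ → ℝ) =ᵐ[μ.restrict s]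
            fun t => (f : ℝ → ℝ) t + (g : ℝ → ℝ) t :=
          ae_restrict_of_ae (Lp.coeFn_add f g)
        show (∫ t in s, ((f + g : Lp ℝ 1 μ) : ℝ → ℝ) t ∂μ) =
          (∫ t in s, (f : ℝ → ℝ) t ∂μ) + ∫ t in s, (g : ℝ → ℝ) t ∂μ
        rw [integral_congr_ae h1]
        exact integral_add (L1.integrable_coeFn f).integrableOn
          (L1.integrable_coeFn g).integrableOn
      map_smul' := fun c f => by
        have h1 : ((c • f : Lp ℝ 1 μ) : ℝ → ℝ) =ᵐ[μ.restrict s]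
            fun t => c * (f : ℝ → ℝ) t :=
          ae_restrict_of_ae (Lp.coeFn_smul c f)
        show (∫ t in s, ((c • f : Lp ℝ 1 μ) : ℝ → ℝ) t ∂μ) =
          c • ∫ t in s, (f : ℝ → ℝ) t ∂μ
        rw [integral_congr_ae h1, integral_const_mul, smul_eq_mul] }
    1
    (fun f => by
      simp only [LinearMap.coe_mk, AddHom.coe_mk, one_mul]
      calc ‖∫ t in s, (f : ℝ → ℝ) t ∂μ‖ ≤ ∫ t in s, ‖(f : ℝ → ℝ) t‖ ∂μ :=
            norm_integral_le_integral_norm _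
      _ ≤ ∫ t, ‖(f : ℝ → ℝ) t‖ ∂μ :=
            setIntegral_le_integral (L1.integrable_coeFn f).norm
              (ae_of_all _ fun _ => norm_nonneg _)
      _ = ‖f‖ := (L1.norm_eq_integral_norm f).symm)

lemma setIntCLM_apply (μ : Measure ℝ) (s : Set ℝ) (f : Lp ℝ 1 μ) :
    setIntCLM μ s f = ∫ t in s, (f : ℝ → ℝ) t ∂μ := rfl

lemma norm_setIntCLM_apply_le (μ : Measure ℝ) (s : Set ℝ) (f : Lp ℝ 1 μ) :
    ‖setIntCLM μ s f‖ ≤ ∫ t in s, ‖(f : ℝ → ℝ) t‖ ∂μ := by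
  rw [setIntCLM_apply]
  exact norm_integral_le_integral_norm _

end Stmt0Aux

open Stmt0Aux

theorem stmt0 (n m N : ℕ) (ε : ℝ) (hn : 0 < n) (hε : 0 < ε) (hε1 : ε < 1)
    (hm : (m : ℝ) = n / ε) (hN : N = n + m ^ n)
    (idx : ℕ → Fin n → Fin m) (hidx : Set.BijOn idx (Set.Ioc n N) Set.univ) :
    ∃ T : Lp ℝ 1 (volume.restrict (Set.Ico (0 : ℝ) 1)) →L[ℝ]
        Lp ℝ 1 (volume.restrict (Set.Ico (0 : ℝ) 1)),
      (∀ j, 1 ≤ j → j ≤ N →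
        ∀ f : Lp ℝ 1 (volume.restrict (Set.Ico (0 : ℝ) 1)),
          (f : ℝ → ℝ) =ᵐ[volume.restrict (Set.Ico (0 : ℝ) 1)]
            (fun t => (N : ℝ) *
              Set.indicator (Set.Ico (((j : ℝ) - 1) / N) ((j : ℝ) / N)) (fun _ => (1 : ℝ)) t) →
          (T f : ℝ → ℝ) =ᵐ[volume.restrict (Set.Ico (0 : ℝ) 1)] xfun n m N idx j) ∧
      ‖ContinuousLinearMap.id ℝ (Lp ℝ 1 (volume.restrict (Set.Ico (0 : ℝ) 1))) - T‖ ≤ ε := by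
  classical
  set μ : Measure ℝ := volume.restrict (Set.Ico (0 : ℝ) 1) with hμdef
  haveI : IsFiniteMeasure μ := by
    constructor
    rw [hμdef, Measure.restrict_apply_univ, Real.volume_Ico]
    simp
  -- basic positivity
  have hnN : n ≤ N := hN ▸ Nat.le_add_right _ _
  have hN0 : 0 < N := lt_of_lt_of_le hn hnN
  have hNR : (0 : ℝ) < N := by exact_mod_cast hN0
  have hmR : (0 : ℝ) < m := by rw [hm]; positivity
  have hm0 : 0 < m := by exact_mod_cast hmR
  -- the intervals J j
  set J : ℕ → Set ℝ := fun j => Set.Ico (((j : ℝ) - 1) / N) ((j : ℝ) / N) with hJdef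
  have hJmeas : ∀ j, MeasurableSet (J j) := fun j => measurableSet_Ico
  have hJsub : ∀ j, 1 ≤ j → j ≤ N → J j ⊆ Set.Ico (0 : ℝ) 1 := by
    intro j hj1 hjN t ht
    have h1 : (1 : ℝ) ≤ j := by exact_mod_cast hj1
    have h2 : (j : ℝ) ≤ N := by exact_mod_cast hjN
    constructor
    · exact le_trans (div_nonneg (by linarith) hNR.le) ht.1
    · exact lt_of_lt_of_le ht.2 (by rw [div_le_one hNR]; exact h2)
  have hμJ : ∀ j, 1 ≤ j → j ≤ N → μ (J j) = ENNReal.ofReal (1 / N) := by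
    intro j hj1 hjN
    rw [hμdef, Measure.restrict_apply (hJmeas j),
      Set.inter_eq_self_of_subset_left (hJsub j hj1 hjN), hJdef]
    rw [Real.volume_Ico]
    congr 1
    field_simp
    ring
  have hJdisj : ∀ j j', j ≠ j' → Disjoint (J j) (J j') := by
    intro j j' hne
    rw [hJdef]
    rw [Set.Ico_disjoint_Ico]
    have key : ∀ a b : ℕ, a < b → ((a : ℝ)) / N ≤ ((b : ℝ) - 1) / N := by
      intro a b hab
      gcongr
      have : (a : ℝ) + 1 ≤ b := by exact_mod_cast hab
      linarith
    rcases lt_or_gt_of_ne hne with h | h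
    · exact le_trans (inf_le_left.trans (key j j' h)) le_sup_right
    · exact le_trans (inf_le_right.trans (key j' j h)) le_sup_left
  -- the small intervals
  have hIkmeas : ∀ k i : ℕ, MeasurableSet (Ik m N k i) := by
    intro k i; unfold Ik; exact measurableSet_Ico
  have hIksub : ∀ (k : Fin n) (i : Fin m),
      Ik m N ((k : ℕ) + 1) ((i : ℕ) + 1) ⊆ Set.Ico (0 : ℝ) 1 := by
    intro k i t ht
    unfold Ik at ht
    obtain ⟨h1, h2⟩ := ht
    push_cast at h1 h2
    have e1 : ((k : ℝ) + 1) - 1 = (k : ℝ) := by ring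
    have e2 : ((i : ℝ) + 1) - 1 = (i : ℝ) := by ring
    rw [e1, e2] at h1
    rw [e1] at h2
    have hi : (i : ℝ) + 1 ≤ m := by exact_mod_cast i.isLt
    have hk : (k : ℝ) + 1 ≤ n := by exact_mod_cast k.isLt
    have hnNR : (n : ℝ) ≤ N := by exact_mod_cast hnN
    constructor
    · have : (0 : ℝ) ≤ (k : ℝ) / N + (i : ℝ) / (m * N) := by positivity
      linarith
    · have h3 : ((i : ℝ) + 1) / (m * N) ≤ 1 / N := by
        rw [div_le_div_iff₀ (by positivity) hNR]
        nlinarith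
      have h4 : (k : ℝ) / N + 1 / N ≤ 1 := by
        rw [← add_div, div_le_one hNR]
        linarith
      linarith
  have hμIk : ∀ (k : Fin n) (i : Fin m),
      μ (Ik m N ((k : ℕ) + 1) ((i : ℕ) + 1)) = ENNReal.ofReal (1 / (m * N)) := by
    intro k i
    rw [hμdef, Measure.restrict_apply (hIkmeas _ _),
      Set.inter_eq_self_of_subset_left (hIksub k i)]
    unfold Ik
    rw [Real.volume_Ico]
    congr 1
    push_cast
    field_simp
    ring
  -- the building blocks u j
  set u : ℕ → Lp ℝ 1 μ := fun j => ∑ k : Fin n,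
    indicatorConstLp 1 (hIkmeas ((k : ℕ) + 1) ((idx j k : ℕ) + 1)) (measure_ne_top μ _)
      (N : ℝ) with hudef
  have hεm : (n : ℝ) / m = ε := by
    rw [hm]
    have hn0 : (n : ℝ) ≠ 0 := by positivity
    field_simp
  have hu_norm : ∀ j, ‖u j‖ ≤ ε := by
    intro j
    calc ‖u j‖ ≤ ∑ k : Fin n,
        ‖indicatorConstLp 1 (hIkmeas ((k : ℕ) + 1) ((idx j k : ℕ) + 1)) (measure_ne_top μ _)
          (N : ℝ)‖ := norm_sum_le _ _
    _ = ∑ _k : Fin n, (N : ℝ) * (1 / (m * N)) := by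
        refine Finset.sum_congr rfl fun k _ => ?_
        rw [norm_indicatorConstLp one_ne_zero ENNReal.one_ne_top, measureReal_def, hμIk k (idx j k),
          ENNReal.toReal_ofReal (by positivity)]
        simp [abs_of_nonneg hNR.le]
    _ = (n : ℝ) * ((N : ℝ) * (1 / (m * N))) := by
        rw [Finset.sum_const, Finset.card_univ, Fintype.card_fin, nsmul_eq_mul]
    _ = (n : ℝ) / m := by field_simp
    _ = ε := hεm
  -- the perturbation S and the operator T
  set S : Lp ℝ 1 μ →L[ℝ] Lp ℝ 1 μ :=
    ∑ j ∈ Finset.Ioc n N, (setIntCLM μ (J j)).smulRight (u j) with hSdef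
  refine ⟨ContinuousLinearMap.id ℝ (Lp ℝ 1 μ) + S, ?_, ?_⟩
  · intro j hj1 hjN f hf
    have hIcoJ : Set.Ico (((j : ℝ) - 1) / N) ((j : ℝ) / N) = J j := by simp only [hJdef]
    have hφ : ∀ j' ∈ Finset.Ioc n N,
        setIntCLM μ (J j') f = if j' = j then 1 else 0 := by
      intro j' hj'
      rw [setIntCLM_apply]
      have hfr : (f : ℝ → ℝ) =ᵐ[μ.restrict (J j')]
          fun t => (N : ℝ) * Set.indicator (Set.Ico (((j : ℝ) - 1) / N) ((j : ℝ) / N))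
            (fun _ => (1 : ℝ)) t := ae_restrict_of_ae hf
      rw [integral_congr_ae hfr]
      have e : (fun t => (N : ℝ) * Set.indicator (Set.Ico (((j : ℝ) - 1) / N) ((j : ℝ) / N))
            (fun _ => (1 : ℝ)) t)
          = Set.indicator (Set.Ico (((j : ℝ) - 1) / N) ((j : ℝ) / N)) (fun _ => (N : ℝ)) := by
        funext t
        by_cases h : t ∈ Set.Ico (((j : ℝ) - 1) / N) ((j : ℝ) / N) <;> simp [h]
      rw [e, integral_indicator measurableSet_Ico, setIntegral_const, measureReal_def,
        Measure.restrict_apply measurableSet_Ico, hIcoJ]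
      by_cases hjj : j' = j
      · rw [if_pos hjj, hjj, Set.inter_self, hμJ j hj1 hjN,
          ENNReal.toReal_ofReal (by positivity), smul_eq_mul]
        field_simp
      · rw [if_neg hjj, (hJdisj j j' fun h => hjj h.symm).inter_eq]
        simp
    have hSf : S f = if j ∈ Finset.Ioc n N then u j else 0 := by
      rw [hSdef, ContinuousLinearMap.sum_apply]
      have hterm : ∀ j' ∈ Finset.Ioc n N,
          ((setIntCLM μ (J j')).smulRight (u j')) f = if j' = j then u j' else 0 := by
        intro j' hj'
        rw [ContinuousLinearMap.smulRight_apply, hφ j' hj']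
        by_cases hjj : j' = j <;> simp [hjj]
      rw [Finset.sum_congr rfl hterm, Finset.sum_ite_eq' (Finset.Ioc n N) j (fun j' => u j')]
    by_cases hjn : j ≤ n
    · have hnotmem : j ∉ Finset.Ioc n N := by
        simp only [Finset.mem_Ioc, not_and]
        omega
      rw [if_neg hnotmem] at hSf
      have hTf : (ContinuousLinearMap.id ℝ (Lp ℝ 1 μ) + S) f = f := by
        rw [ContinuousLinearMap.add_apply, ContinuousLinearMap.id_apply, hSf, add_zero]
      rw [hTf]
      have hx : xfun n m N idx j = fun t => (N : ℝ) *
          Set.indicator (Set.Ico (((j : ℝ) - 1) / N) ((j : ℝ) / N)) (fun _ => (1 : ℝ)) t := by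
        funext t
        simp only [xfun, if_pos hjn]
      rw [hx]
      exact hf
    · push_neg at hjn
      have hjmem : j ∈ Finset.Ioc n N := Finset.mem_Ioc.2 ⟨hjn, hjN⟩
      rw [if_pos hjmem] at hSf
      have hTf : (ContinuousLinearMap.id ℝ (Lp ℝ 1 μ) + S) f = f + u j := by
        rw [ContinuousLinearMap.add_apply, ContinuousLinearMap.id_apply, hSf]
      rw [hTf]
      have hcu : (u j : ℝ → ℝ) =ᵐ[μ] fun t => (N : ℝ) * ∑ k : Fin n,
          Set.indicator (Ik m N ((k : ℕ) + 1) ((idx j k : ℕ) + 1)) (fun _ => (1 : ℝ)) t := by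
        refine (coeFn_finset_sum _ _).trans ?_
        have hall : ∀ᵐ t ∂μ, ∀ k : Fin n,
            (indicatorConstLp 1 (hIkmeas ((k : ℕ) + 1) ((idx j k : ℕ) + 1))
              (measure_ne_top μ _) (N : ℝ) : ℝ → ℝ) t
            = Set.indicator (Ik m N ((k : ℕ) + 1) ((idx j k : ℕ) + 1)) (fun _ => (N : ℝ)) t :=
          ae_all_iff.2 fun k => indicatorConstLp_coeFn
        filter_upwards [hall] with t ht
        rw [Finset.mul_sum]
        refine Finset.sum_congr rfl fun k _ => ?_
        rw [ht k]
        by_cases h : t ∈ Ik m N ((k : ℕ) + 1) ((idx j k : ℕ) + 1) <;> simp [h]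
      filter_upwards [Lp.coeFn_add f (u j), hf, hcu] with t h1 h2 h3
      rw [h1, Pi.add_apply, h2, h3]
      simp only [xfun, if_neg (by omega : ¬ j ≤ n)]
      ring
  · have hid : ContinuousLinearMap.id ℝ (Lp ℝ 1 μ)
        - (ContinuousLinearMap.id ℝ (Lp ℝ 1 μ) + S) = -S := by
      abel
    rw [hid, norm_neg]
    refine ContinuousLinearMap.opNorm_le_bound _ hε.le fun f => ?_
    rw [hSdef, ContinuousLinearMap.sum_apply]
    have hnonneg : ∀ j', (0 : ℝ) ≤ ∫ t in J j', ‖(f : ℝ → ℝ) t‖ ∂μ :=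
      fun j' => integral_nonneg fun t => norm_nonneg _
    calc ‖∑ j' ∈ Finset.Ioc n N, ((setIntCLM μ (J j')).smulRight (u j')) f‖
        ≤ ∑ j' ∈ Finset.Ioc n N, ‖((setIntCLM μ (J j')).smulRight (u j')) f‖ :=
          norm_sum_le _ _
      _ ≤ ∑ j' ∈ Finset.Ioc n N, (∫ t in J j', ‖(f : ℝ → ℝ) t‖ ∂μ) * ε := by
          refine Finset.sum_le_sum fun j' _ => ?_
          rw [ContinuousLinearMap.smulRight_apply, norm_smul]
          exact mul_le_mul (norm_setIntCLM_apply_le μ (J j') f) (hu_norm j')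
            (norm_nonneg _) (hnonneg j')
      _ = ε * ∑ j' ∈ Finset.Ioc n N, ∫ t in J j', ‖(f : ℝ → ℝ) t‖ ∂μ := by
          rw [← Finset.sum_mul, mul_comm]
      _ ≤ ε * ‖f‖ := by
          refine mul_le_mul_of_nonneg_left ?_ hε.le
          have hsum : ∑ j' ∈ Finset.Ioc n N, ∫ t in J j', ‖(f : ℝ → ℝ) t‖ ∂μ
              = ∫ t in ⋃ j' ∈ Finset.Ioc n N, J j', ‖(f : ℝ → ℝ) t‖ ∂μ :=
            (integral_biUnion_finset _ (fun j' _ => hJmeas j')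
              (fun a _ b _ hab => hJdisj a b hab)
              (fun j' _ => (L1.integrable_coeFn f).norm.integrableOn)).symm
          rw [hsum, L1.norm_eq_integral_norm]
          exact setIntegral_le_integral (L1.integrable_coeFn f).norm
            (ae_of_all _ fun _ => norm_nonneg _)
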